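/- Let λ₁ > 0, λ₂ > 0, λ₃ < 0, let 0 < δ < 1 be sufficiently small and η > 0 with η = o(X). Then for all sufficiently large X, ∭_{[δX,(1-δ)X]³} max(0, η − |λ₁u₁ + λ₂u₂ + λ₃u₃|) du₁ du₂ du₃ ≫ η² X², with implied constant depending only on λ₁, λ₂, λ₃, δ. -/

import Mathlib

open MeasureTheory Finset
open scoped Classical
noncomputable section

/-- `e(x) = e^{2πix}` -/
def e2 (x : ℝ) : ℂ := Complex.exp (2 * Real.pi * Complex.I * (x : ℂ))

/-- Fejér-type kernel `K_η(α) = (sin(πηα)/(πα))²`, with `K_η(0) = η²`. -/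
def Keta (η α : ℝ) : ℝ :=
  if α = 0 then η ^ 2 else (Real.sin (Real.pi * η * α) / (Real.pi * α)) ^ 2

/-- `S_k(α) = Σ_{δX ≤ p^k ≤ X} log p · e(p^k α)` over primes `p`. -/
def Skp (k δ X α : ℝ) : ℂ :=
  ∑ p ∈ Finset.range (⌊X⌋₊ + 1),
    if p.Prime ∧ δ * X ≤ (p : ℝ) ^ k ∧ (p : ℝ) ^ k ≤ X
      then (Real.log p : ℂ) * e2 ((p : ℝ) ^ k * α) else 0

/-- `S₁(α) = Σ_{δX ≤ p ≤ X} log p · e(pα)` over primes `p`. -/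
def Ssum (δ X α : ℝ) : ℂ :=
  ∑ p ∈ Finset.range (⌊X⌋₊ + 1),
    if p.Prime ∧ δ * X ≤ (p : ℝ) ∧ (p : ℝ) ≤ X
      then (Real.log p : ℂ) * e2 ((p : ℝ) * α) else 0

/-- `S(α) = Σ_{p ≤ X} log p · e(pα)` over primes `p`. -/
def Sfull (X α : ℝ) : ℂ :=
  ∑ p ∈ Finset.range (⌊X⌋₊ + 1),
    if p.Prime ∧ (p : ℝ) ≤ X then (Real.log p : ℂ) * e2 ((p : ℝ) * α) else 0

/-- `U_k(α) = Σ_{δX ≤ n^k ≤ X} e(n^k α)` over positive integers `n`. -/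
def Uk (k δ X α : ℝ) : ℂ :=
  ∑ n ∈ Finset.range (⌊X⌋₊ + 1),
    if 1 ≤ n ∧ δ * X ≤ (n : ℝ) ^ k ∧ (n : ℝ) ^ k ≤ X
      then e2 ((n : ℝ) ^ k * α) else 0

/-- `T_k(α) = ∫_{(δX)^{1/k}}^{X^{1/k}} e(t^k α) dt`. -/
def Tk (k δ X α : ℝ) : ℂ :=
  ∫ t in (δ * X) ^ (1 / k)..(X ^ (1 / k)), e2 (t ^ k * α)

/-- Chebyshev function `θ(t) = Σ_{p ≤ t} log p`. -/
def chebθ (t : ℝ) : ℝ :=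
  ∑ p ∈ Finset.range (⌊t⌋₊ + 1), if p.Prime then Real.log p else 0

/-- Generalized Selberg integral `J_k(X,h)`. -/
def Jsel (k X h : ℝ) : ℝ :=
  ∫ x in X..(2 * X),
    (chebθ ((x + h) ^ (1 / k)) - chebθ (x ^ (1 / k)) - ((x + h) ^ (1 / k) - x ^ (1 / k))) ^ 2

lemma sandwich_aux (f : ℝ → ℝ) (hf : Continuous f) (hnn : ∀ x, 0 ≤ f x)
    (a b c d M : ℝ) (hac : a ≤ c) (hcd : c ≤ d) (hdb : d ≤ b)
    (hM : ∀ x ∈ Set.Icc c d, M ≤ f x) :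
    M * (d - c) ≤ ∫ x in a..b, f x := by
  have iac : IntervalIntegrable f volume a c := hf.intervalIntegrable _ _
  have icd : IntervalIntegrable f volume c d := hf.intervalIntegrable _ _
  have idb : IntervalIntegrable f volume d b := hf.intervalIntegrable _ _
  have icb : IntervalIntegrable f volume c b := hf.intervalIntegrable _ _
  rw [← intervalIntegral.integral_add_adjacent_intervals iac icb,
      ← intervalIntegral.integral_add_adjacent_intervals icd idb]
  have h1 : (0:ℝ) ≤ ∫ x in a..c, f x :=
    intervalIntegral.integral_nonneg hac fun x _ => hnn x
  have h3 : (0:ℝ) ≤ ∫ x in d..b, f x :=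
    intervalIntegral.integral_nonneg hdb fun x _ => hnn x
  have h2 : M * (d - c) ≤ ∫ x in c..d, f x := by
    have := intervalIntegral.integral_mono_on (f := fun _ => M) hcd
      intervalIntegrable_const icd hM
    simpa [mul_comm] using this
  linarith

set_option maxHeartbeats 1600000 in
theorem stmt4 (l1 l2 l3 : ℝ) (h1 : 0 < l1) (h2 : 0 < l2) (h3 : l3 < 0) :
    ∃ δ0 > (0 : ℝ), ∀ δ : ℝ, 0 < δ → δ < δ0 → ∃ c > (0 : ℝ), ∀ η : ℝ → ℝ,
      (∀ X, 0 < η X) →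
      Filter.Tendsto (fun X => η X / X) Filter.atTop (nhds 0) →
      ∃ X0 : ℝ, ∀ X ≥ X0,
        c * (η X) ^ 2 * X ^ 2 ≤
          ∫ u1 in (δ * X)..((1 - δ) * X), ∫ u2 in (δ * X)..((1 - δ) * X),
            ∫ u3 in (δ * X)..((1 - δ) * X),
              max 0 (η X - |l1 * u1 + l2 * u2 + l3 * u3|) := by
  obtain ⟨L, hLdef⟩ : ∃ L : ℝ, L = -l3 := ⟨_, rfl⟩
  have hL : (0:ℝ) < L := by rw [hLdef]; linarith
  obtain ⟨S, hSdef⟩ : ∃ S : ℝ, S = l1 + l2 := ⟨_, rfl⟩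
  have hS : (0:ℝ) < S := by rw [hSdef]; linarith
  obtain ⟨m, hmdef⟩ : ∃ m : ℝ, m = min (1/2) (min (L/(2*S)) (S/(2*L))) := ⟨_, rfl⟩
  have hm0 : 0 < m := by
    rw [hmdef]; exact lt_min (by norm_num) (lt_min (by positivity) (by positivity))
  have hm2 : m ≤ 1/2 := by rw [hmdef]; exact min_le_left _ _
  obtain ⟨t, c0, ht1, ht2, hc1, hc2, hrel⟩ :
      ∃ t c0 : ℝ, m ≤ t ∧ t ≤ 1/2 ∧ m ≤ c0 ∧ c0 ≤ 1/2 ∧ S * t = L * c0 := by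
    by_cases h : L ≤ S
    · refine ⟨L/(2*S), 1/2, ?_, ?_, ?_, le_refl _, by field_simp⟩
      · rw [hmdef]; exact le_trans (min_le_right _ _) (min_le_left _ _)
      · rw [div_le_iff₀ (by positivity)]; nlinarith
      · exact hm2
    · refine ⟨1/2, S/(2*L), hm2, le_refl _, ?_, ?_, by field_simp⟩
      · rw [hmdef]; exact le_trans (min_le_right _ _) (min_le_right _ _)
      · rw [div_le_iff₀ (by positivity)]; nlinarith
  obtain ⟨ε, hε0, hε1, hε2⟩ : ∃ ε : ℝ, 0 < ε ∧ ε ≤ m/2 ∧ S * ε ≤ m*L/4 := by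
    refine ⟨min (m/2) (m*L/(4*S)), lt_min (by positivity) (by positivity),
      min_le_left _ _, ?_⟩
    calc S * min (m/2) (m*L/(4*S)) ≤ S * (m*L/(4*S)) :=
          mul_le_mul_of_nonneg_left (min_le_right _ _) hS.le
      _ = m*L/4 := by field_simp
  refine ⟨m/2, by positivity, fun δ hδ0 hδm => ⟨ε^2/L, by positivity, fun η hηpos htend => ?_⟩⟩
  have hev := htend.eventually (gt_mem_nhds (show (0:ℝ) < m*L/4 by positivity))
  obtain ⟨X1, hX1⟩ := Filter.eventually_atTop.mp hev
  refine ⟨max X1 1, fun X hX => ?_⟩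
  have hXpos : (0:ℝ) < X := lt_of_lt_of_le one_pos (le_trans (le_max_right _ _) hX)
  have hN : 0 < η X := hηpos X
  have hNX : η X < m*L/4 * X := by
    have := hX1 X (le_trans (le_max_left _ _) hX)
    rw [div_lt_iff₀ hXpos] at this; linarith
  obtain ⟨w, hw0, hwN, hwm⟩ : ∃ w : ℝ, 0 < w ∧ η X = 2*L*w ∧ w ≤ m/8*X := by
    refine ⟨η X/(2*L), by positivity, by field_simp, ?_⟩
    rw [div_le_iff₀ (by positivity)]; nlinarith
  have hδle : δ * X ≤ (1-δ) * X := by nlinarith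
  have hsub1 : δ*X ≤ t*X - ε*X := by
    have h' : δ ≤ t - ε := by linarith
    nlinarith [mul_le_mul_of_nonneg_right h' hXpos.le]
  have hsub2 : t*X - ε*X ≤ t*X + ε*X := by nlinarith
  have hsub3 : t*X + ε*X ≤ (1-δ)*X := by
    have h' : t + ε ≤ 1 - δ := by linarith
    nlinarith [mul_le_mul_of_nonneg_right h' hXpos.le]
  -- continuity
  have hcont3 : Continuous (fun q : (ℝ×ℝ)×ℝ =>
      max 0 (η X - |l1*q.1.1 + l2*q.1.2 + l3*q.2|)) := by fun_prop
  have hFcont : Continuous (fun p : ℝ×ℝ =>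
      ∫ u3 in (δ*X)..((1-δ)*X), max 0 (η X - |l1*p.1 + l2*p.2 + l3*u3|)) :=
    intervalIntegral.continuous_parametric_intervalIntegral_of_continuous'
      (f := fun (p : ℝ×ℝ) (u3 : ℝ) => max 0 (η X - |l1*p.1 + l2*p.2 + l3*u3|)) hcont3 _ _
  have hFnn : ∀ u1 u2 : ℝ,
      0 ≤ ∫ u3 in (δ*X)..((1-δ)*X), max 0 (η X - |l1*u1 + l2*u2 + l3*u3|) :=
    fun u1 u2 => intervalIntegral.integral_nonneg hδle fun x _ => le_max_left _ _
  -- inner bound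
  have hinner : ∀ u1 ∈ Set.Icc (t*X - ε*X) (t*X + ε*X),
      ∀ u2 ∈ Set.Icc (t*X - ε*X) (t*X + ε*X),
      (η X)^2/(2*L) ≤ ∫ u3 in (δ*X)..((1-δ)*X), max 0 (η X - |l1*u1 + l2*u2 + l3*u3|) := by
    intro u1 hu1 u2 hu2
    obtain ⟨a, hadef⟩ : ∃ a : ℝ, a = l1*u1 + l2*u2 := ⟨_, rfl⟩
    have ha1 : S*(t-ε)*X ≤ a := by
      have e1 : l1*(t*X - ε*X) ≤ l1*u1 := mul_le_mul_of_nonneg_left hu1.1 h1.le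
      have e2 : l2*(t*X - ε*X) ≤ l2*u2 := mul_le_mul_of_nonneg_left hu2.1 h2.le
      rw [hadef, hSdef]; nlinarith
    have ha2 : a ≤ S*(t+ε)*X := by
      have e1 : l1*u1 ≤ l1*(t*X + ε*X) := mul_le_mul_of_nonneg_left hu1.2 h1.le
      have e2 : l2*u2 ≤ l2*(t*X + ε*X) := mul_le_mul_of_nonneg_left hu2.2 h2.le
      rw [hadef, hSdef]; nlinarith
    have hrelX : S*t*X = L*c0*X := by rw [hrel]
    have hε2X : S*ε*X ≤ m*L/4*X := mul_le_mul_of_nonneg_right hε2 hXpos.le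
    have hc1X : L*m*X ≤ L*c0*X :=
      mul_le_mul_of_nonneg_right (mul_le_mul_of_nonneg_left hc1 hL.le) hXpos.le
    have hc2X : L*c0*X ≤ L*(1/2)*X :=
      mul_le_mul_of_nonneg_right (mul_le_mul_of_nonneg_left hc2 hL.le) hXpos.le
    have hwL : L*w ≤ L*(m/8*X) := mul_le_mul_of_nonneg_left hwm hL.le
    have hδL : L*δ*X ≤ L*(m/2)*X :=
      mul_le_mul_of_nonneg_right (mul_le_mul_of_nonneg_left hδm.le hL.le) hXpos.le
    have hmL : L*m*X ≤ L*(1/2)*X :=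
      mul_le_mul_of_nonneg_right (mul_le_mul_of_nonneg_left hm2 hL.le) hXpos.le
    have hcen1 : δ*X + w ≤ a/L := by
      rw [le_div_iff₀ hL]; nlinarith
    have hcen2 : a/L + w ≤ (1-δ)*X := by
      have : a/L ≤ (1-δ)*X - w := by rw [div_le_iff₀ hL]; nlinarith
      linarith
    have key := sandwich_aux (fun u3 => max 0 (η X - |l1*u1 + l2*u2 + l3*u3|))
      (by fun_prop) (fun x => le_max_left _ _)
      (δ*X) ((1-δ)*X) (a/L - w) (a/L + w) (η X/2)
      (by linarith) (by linarith) hcen2 ?_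
    · have heq : η X/2 * ((a/L + w) - (a/L - w)) = (η X)^2/(2*L) := by
        rw [hwN]; field_simp; ring
      rw [heq] at key
      exact key
    · intro u3 hu3
      have hid : l1*u1 + l2*u2 + l3*u3 = l3*(u3 - a/L) := by
        rw [hadef, hLdef]
        have : (l3 : ℝ) ≠ 0 := by linarith
        field_simp
        ring
      have habs : |l1*u1 + l2*u2 + l3*u3| ≤ η X/2 := by
        rw [hid, abs_mul, show |l3| = L by rw [hLdef, abs_of_neg h3]]
        have h5 : |u3 - a/L| ≤ w := abs_le.mpr ⟨by linarith [hu3.1], by linarith [hu3.2]⟩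
        calc L * |u3 - a/L| ≤ L * w := mul_le_mul_of_nonneg_left h5 hL.le
          _ = η X/2 := by rw [hwN]; ring
      exact le_trans (by linarith) (le_max_right _ _)
  -- middle bound
  have hmid : ∀ u1 ∈ Set.Icc (t*X - ε*X) (t*X + ε*X),
      (η X)^2/(2*L) * (2*(ε*X)) ≤ ∫ u2 in (δ*X)..((1-δ)*X),
        ∫ u3 in (δ*X)..((1-δ)*X), max 0 (η X - |l1*u1 + l2*u2 + l3*u3|) := by
    intro u1 hu1
    have key := sandwich_aux
      (fun u2 => ∫ u3 in (δ*X)..((1-δ)*X), max 0 (η X - |l1*u1 + l2*u2 + l3*u3|))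
      (hFcont.comp (Continuous.prodMk_right u1)) (fun u2 => hFnn u1 u2)
      (δ*X) ((1-δ)*X) (t*X - ε*X) (t*X + ε*X) ((η X)^2/(2*L))
      hsub1 hsub2 hsub3 (fun u2 hu2 => hinner u1 hu1 u2 hu2)
    have heq : (t*X + ε*X) - (t*X - ε*X) = 2*(ε*X) := by ring
    rw [heq] at key
    exact key
  -- outer bound
  have hGcont : Continuous (fun u1 : ℝ => ∫ u2 in (δ*X)..((1-δ)*X),
      ∫ u3 in (δ*X)..((1-δ)*X), max 0 (η X - |l1*u1 + l2*u2 + l3*u3|)) :=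
    intervalIntegral.continuous_parametric_intervalIntegral_of_continuous'
      (f := fun (u1 u2 : ℝ) =>
        ∫ u3 in (δ*X)..((1-δ)*X), max 0 (η X - |l1*u1 + l2*u2 + l3*u3|))
      (by exact hFcont) _ _
  have hGnn : ∀ u1 : ℝ, 0 ≤ ∫ u2 in (δ*X)..((1-δ)*X),
      ∫ u3 in (δ*X)..((1-δ)*X), max 0 (η X - |l1*u1 + l2*u2 + l3*u3|) :=
    fun u1 => intervalIntegral.integral_nonneg hδle fun u2 _ => hFnn u1 u2
  have key := sandwich_aux
    (fun u1 => ∫ u2 in (δ*X)..((1-δ)*X),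
      ∫ u3 in (δ*X)..((1-δ)*X), max 0 (η X - |l1*u1 + l2*u2 + l3*u3|))
    hGcont hGnn (δ*X) ((1-δ)*X) (t*X - ε*X) (t*X + ε*X) ((η X)^2/(2*L) * (2*(ε*X)))
    hsub1 hsub2 hsub3 hmid
  have heq : (t*X + ε*X) - (t*X - ε*X) = 2*(ε*X) := by ring
  rw [heq] at key
  have hpos : 0 ≤ ε^2/L*(η X)^2*X^2 := by positivity
  have heq2 : (η X)^2/(2*L)*(2*(ε*X))*(2*(ε*X))
      = ε^2/L*(η X)^2*X^2 + ε^2/L*(η X)^2*X^2 := by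
    field_simp; ring
  linarith

end
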